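/- The function f(x) = x₃ + 2√(x₂x₄) − x₁ is strictly Schur-concave on the set Z₄ = {x ∈ ℝ⁴ : x₁ ≥ x₂ ≥ x₃ ≥ x₄ ≥ 0}: if x, y ∈ Z₄ with x ≻ y and x is not a permutation of y, then f(x) < f(y). -/

import Mathlib

set_option maxHeartbeats 1000000

/-- The sum of the `k` largest entries of `u`. -/
noncomputable def maxSum {n : ℕ} (u : Fin n → ℝ) (k : ℕ) : ℝ :=
  sSup {s : ℝ | ∃ A : Finset (Fin n), A.card = k ∧ ∑ i ∈ A, u i = s}

/-- `Majorizes v u` means `u ≺ v`. -/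
def Majorizes {n : ℕ} (v u : Fin n → ℝ) : Prop :=
  (∀ k : ℕ, maxSum u k ≤ maxSum v k) ∧ ∑ i, u i = ∑ i, v i

lemma core_ineq (a b c d p q r t : ℝ)
    (hab : a ≥ b) (hbc : b ≥ c) (hcd : c ≥ d) (hd0 : d ≥ 0)
    (hpq : p ≥ q) (hqr : q ≥ r) (hrt : r ≥ t) (ht0 : t ≥ 0)
    (h1 : p ≤ a) (h2 : p + q ≤ a + b) (h3 : p + q + r ≤ a + b + c)
    (hsum : p + q + r + t = a + b + c + d)
    (hne : ¬(a = p ∧ b = q ∧ c = r ∧ d = t)) :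
    c + 2 * Real.sqrt (b * d) - a < r + 2 * Real.sqrt (q * t) - p := by
  have htd : d ≤ t := by linarith
  by_contra hcon
  push_neg at hcon
  -- hcon : r + 2 * √(q t) - p ≤ c + 2 * √(b d) - a
  rcases eq_or_lt_of_le ht0.le with ht0' | htpos
  · -- t = 0, hence d = 0
    have ht' : t = 0 := ht0'.symm
    have hd' : d = 0 := le_antisymm (by linarith) hd0
    rw [ht', hd'] at hcon
    simp only [mul_zero, Real.sqrt_zero] at hcon
    -- now linear: 2(a-p)+(b-q) ≤ 0 with a-p ≥ 0, a+b-p-q ≥ 0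
    have ha : a = p := by linarith
    have hb : b = q := by linarith
    have hc : c = r := by linarith
    exact hne ⟨ha, hb, hc, by linarith⟩
  · -- t > 0
    have hq0 : (0:ℝ) ≤ q := by linarith
    have hb0 : (0:ℝ) ≤ b := by linarith
    set sb := Real.sqrt b with hsb
    set sd := Real.sqrt d with hsd
    set sq := Real.sqrt q with hsq
    set st := Real.sqrt t with hst
    have hsb2 : sb ^ 2 = b := Real.sq_sqrt hb0
    have hsd2 : sd ^ 2 = d := Real.sq_sqrt hd0
    have hsq2 : sq ^ 2 = q := Real.sq_sqrt hq0
    have hst2 : st ^ 2 = t := Real.sq_sqrt ht0.le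
    have hsbn : 0 ≤ sb := Real.sqrt_nonneg _
    have hsdn : 0 ≤ sd := Real.sqrt_nonneg _
    have hsqn : 0 ≤ sq := Real.sqrt_nonneg _
    have hstpos : 0 < st := Real.sqrt_pos.mpr htpos
    have hsqst : st ≤ sq := Real.sqrt_le_sqrt (by linarith)
    have hsqpos : 0 < sq := lt_of_lt_of_le hstpos hsqst
    rw [Real.sqrt_mul hb0, Real.sqrt_mul hq0] at hcon
    rw [← hsb, ← hsd, ← hsq, ← hst] at hcon
    -- eliminate r, c kept; r = c + (a-p) + (sb²-sq²) + (sd²-st²)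
    have hr : r = c + (a - p) + (sb ^ 2 - sq ^ 2) + (sd ^ 2 - st ^ 2) := by
      rw [hsb2, hsd2, hsq2, hst2]; linarith
    have hcon2 : (c + (a - p) + (sb ^ 2 - sq ^ 2) + (sd ^ 2 - st ^ 2)) + 2 * (sq * st) - p
        ≤ c + 2 * (sb * sd) - a := by rw [← hr]; linarith
    have h5 : ((c + (a - p) + (sb ^ 2 - sq ^ 2) + (sd ^ 2 - st ^ 2)) + 2 * (sq * st) - p)
          * (sq * st) ≤ (c + 2 * (sb * sd) - a) * (sq * st) :=
      mul_le_mul_of_nonneg_right hcon2 (by positivity)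
    have hA : 0 ≤ a - p := by linarith
    have hB : 0 ≤ a + sb ^ 2 - p - sq ^ 2 := by rw [hsb2, hsq2]; linarith
    have hTD : sd ^ 2 ≤ st ^ 2 := by rw [hsd2, hst2]; exact htd
    have e3nn : 0 ≤ (st ^ 2 - sd ^ 2) * (sq * (sq - st)) :=
      mul_nonneg (by linarith) (mul_nonneg hsqn (by linarith))
    have e4nn : 0 ≤ (sb * st - sd * sq) ^ 2 := sq_nonneg _
    have key : ((c + (a - p) + (sb ^ 2 - sq ^ 2) + (sd ^ 2 - st ^ 2)) + 2 * (sq * st) - p)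
          * (sq * st) - (c + 2 * (sb * sd) - a) * (sq * st)
        = 2 * ((a - p) * (sq * st)) + (sb ^ 2 - sq ^ 2) * (st * (sq - st))
          + (st ^ 2 - sd ^ 2) * (sq * (sq - st)) + (sb * st - sd * sq) ^ 2 := by ring
    rcases le_or_gt sq sb with hbq | hbq
    · -- b ≥ q case: all four terms nonneg, so all vanish
      have e1nn : 0 ≤ (a - p) * (sq * st) := mul_nonneg hA (by positivity)
      have hsq2le : sq ^ 2 ≤ sb ^ 2 := by nlinarith
      have e2nn : 0 ≤ (sb ^ 2 - sq ^ 2) * (st * (sq - st)) :=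
        mul_nonneg (by linarith) (mul_nonneg hstpos.le (by linarith))
      have ez1 : (a - p) * (sq * st) = 0 := by linarith only [key, h5, e1nn, e2nn, e3nn, e4nn]
      have ez2 : (sb ^ 2 - sq ^ 2) * (st * (sq - st)) = 0 := by linarith only [key, h5, e1nn, e2nn, e3nn, e4nn]
      have ez3 : (st ^ 2 - sd ^ 2) * (sq * (sq - st)) = 0 := by linarith only [key, h5, e1nn, e2nn, e3nn, e4nn]
      have ez4 : (sb * st - sd * sq) ^ 2 = 0 := by linarith only [key, h5, e1nn, e2nn, e3nn, e4nn]
      have ha : a = p := by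
        rcases mul_eq_zero.mp ez1 with h | h
        · linarith
        · exfalso; have := mul_pos hsqpos hstpos; linarith
      have hE4 : sb * st = sd * sq :=
        sub_eq_zero.mp (pow_eq_zero_iff (n := 2) (by norm_num) |>.mp ez4)
      rcases eq_or_lt_of_le hsqst with hqt | hqt
      · -- sq = st : q = t
        have hqt' : q = t := by rw [← hsq2, ← hst2, hqt]
        have hrq : r = q := le_antisymm hqr (by linarith)
        have hbd : sb = sd := by
          have : sb * st = sd * st := by rw [hE4, hqt]
          exact mul_right_cancel₀ (ne_of_gt hstpos) this
        have hbd' : b = d := by rw [← hsb2, ← hsd2, hbd]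
        have hcb : c = b := le_antisymm hbc (by linarith)
        -- sum: a + 3b = p + 3q, a = p ⇒ b = q
        have hbq' : b = q := by linarith
        exact hne ⟨ha, hbq', by linarith, by linarith⟩
      · -- sq > st
        have hbq2 : b = q := by
          rcases mul_eq_zero.mp ez2 with h | h
          · rw [← hsb2, ← hsq2]; linarith
          · exfalso; rcases mul_eq_zero.mp h with h' | h' <;> linarith
        have htd2 : t = d := by
          rcases mul_eq_zero.mp ez3 with h | h
          · rw [← hst2, ← hsd2]; linarith
          · exfalso; rcases mul_eq_zero.mp h with h' | h' <;> linarith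
        exact hne ⟨ha, hbq2, by linarith, htd2.symm⟩
    · -- b < q case: strict contradiction
      have key2 : ((c + (a - p) + (sb ^ 2 - sq ^ 2) + (sd ^ 2 - st ^ 2)) + 2 * (sq * st) - p)
            * (sq * st) - (c + 2 * (sb * sd) - a) * (sq * st)
          = (a - p) * (sq * st) + (a + sb ^ 2 - p - sq ^ 2) * (sq * st)
            + (st ^ 2 - sd ^ 2) * (sq * (sq - st)) + st ^ 2 * (sq ^ 2 - sb ^ 2)
            + (sb * st - sd * sq) ^ 2 := by ring
      have e1nn : 0 ≤ (a - p) * (sq * st) := mul_nonneg hA (by positivity)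
      have eBnn : 0 ≤ (a + sb ^ 2 - p - sq ^ 2) * (sq * st) := mul_nonneg hB (by positivity)
      have epos : 0 < st ^ 2 * (sq ^ 2 - sb ^ 2) := by
        apply mul_pos (by positivity)
        nlinarith only [mul_pos (sub_pos.mpr hbq) (add_pos_of_nonneg_of_pos hsbn hsqpos)]
      linarith only [key2, h5, e1nn, eBnn, e3nn, e4nn, epos]

lemma bddAbove_sums (u : Fin 4 → ℝ) (k : ℕ) :
    BddAbove {s : ℝ | ∃ A : Finset (Fin 4), A.card = k ∧ ∑ i ∈ A, u i = s} := by
  have hsub : {s : ℝ | ∃ A : Finset (Fin 4), A.card = k ∧ ∑ i ∈ A, u i = s} ⊆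
      Set.range (fun A : Finset (Fin 4) => ∑ i ∈ A, u i) := by
    rintro s ⟨A, -, rfl⟩; exact ⟨A, rfl⟩
  exact (Set.finite_range _).bddAbove.mono hsub

lemma single_le (u : Fin 4 → ℝ) (hx : u 0 ≥ u 1 ∧ u 1 ≥ u 2 ∧ u 2 ≥ u 3 ∧ u 3 ≥ 0)
    (i : Fin 4) : u i ≤ u 0 := by
  obtain ⟨h1, h2, h3, h4⟩ := hx
  fin_cases i <;> simp <;> linarith

lemma single_ge (u : Fin 4 → ℝ) (hx : u 0 ≥ u 1 ∧ u 1 ≥ u 2 ∧ u 2 ≥ u 3 ∧ u 3 ≥ 0)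
    (i : Fin 4) : u 3 ≤ u i := by
  obtain ⟨h1, h2, h3, h4⟩ := hx
  fin_cases i <;> simp <;> linarith

lemma pair_le (u : Fin 4 → ℝ) (hx : u 0 ≥ u 1 ∧ u 1 ≥ u 2 ∧ u 2 ≥ u 3 ∧ u 3 ≥ 0)
    (i j : Fin 4) (hij : i ≠ j) : u i + u j ≤ u 0 + u 1 := by
  obtain ⟨h1, h2, h3, h4⟩ := hx
  fin_cases i <;> fin_cases j <;> simp_all <;> linarith

-- lower bounds: partial sums ≤ maxSum
lemma le_maxSum1 (u : Fin 4 → ℝ) : u 0 ≤ maxSum u 1 :=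
  le_csSup (bddAbove_sums u 1) ⟨{0}, by decide, by simp⟩

lemma le_maxSum2 (u : Fin 4 → ℝ) : u 0 + u 1 ≤ maxSum u 2 :=
  le_csSup (bddAbove_sums u 2) ⟨{0, 1}, by decide, by
    rw [Finset.sum_pair (by decide)]⟩

lemma le_maxSum3 (u : Fin 4 → ℝ) : u 0 + u 1 + u 2 ≤ maxSum u 3 :=
  le_csSup (bddAbove_sums u 3) ⟨{0, 1, 2}, by decide, by
    rw [Finset.sum_insert (by decide), Finset.sum_pair (by decide)]; ring⟩

-- upper bounds: maxSum ≤ partial sums, for sorted u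
lemma maxSum1_le (u : Fin 4 → ℝ) (hx : u 0 ≥ u 1 ∧ u 1 ≥ u 2 ∧ u 2 ≥ u 3 ∧ u 3 ≥ 0) :
    maxSum u 1 ≤ u 0 := by
  apply csSup_le
  · exact ⟨u 0, {0}, by decide, by simp⟩
  rintro s ⟨A, hA, rfl⟩
  obtain ⟨i, rfl⟩ := Finset.card_eq_one.mp hA
  simpa using single_le u hx i

lemma maxSum2_le (u : Fin 4 → ℝ) (hx : u 0 ≥ u 1 ∧ u 1 ≥ u 2 ∧ u 2 ≥ u 3 ∧ u 3 ≥ 0) :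
    maxSum u 2 ≤ u 0 + u 1 := by
  apply csSup_le
  · exact ⟨u 0 + u 1, {0, 1}, by decide, by rw [Finset.sum_pair (by decide)]⟩
  rintro s ⟨A, hA, rfl⟩
  obtain ⟨i, j, hij, rfl⟩ := Finset.card_eq_two.mp hA
  rw [Finset.sum_pair hij]
  exact pair_le u hx i j hij

lemma maxSum3_le (u : Fin 4 → ℝ) (hx : u 0 ≥ u 1 ∧ u 1 ≥ u 2 ∧ u 2 ≥ u 3 ∧ u 3 ≥ 0) :
    maxSum u 3 ≤ u 0 + u 1 + u 2 := by
  apply csSup_le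
  · exact ⟨u 0 + u 1 + u 2, {0, 1, 2}, by decide, by
      rw [Finset.sum_insert (by decide), Finset.sum_pair (by decide)]; ring⟩
  rintro s ⟨A, hA, rfl⟩
  have hcompl : Aᶜ.card = 1 := by
    have := Finset.card_compl A
    simp [hA] at this; omega
  obtain ⟨i, hi⟩ := Finset.card_eq_one.mp hcompl
  have hsum : ∑ j ∈ A, u j + ∑ j ∈ Aᶜ, u j = ∑ j, u j := Finset.sum_add_sum_compl A u
  rw [hi, Finset.sum_singleton] at hsum
  have htot : ∑ j, u j = u 0 + u 1 + u 2 + u 3 := by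
    simp [Fin.sum_univ_four]
  have := single_ge u hx i
  linarith

/-- The function `f(x) = x₃ + 2√(x₂x₄) − x₁` is strictly Schur-concave on
`Z₄ = {x ∈ ℝ⁴ : x₁ ≥ x₂ ≥ x₃ ≥ x₄ ≥ 0}`: if `x, y ∈ Z₄` with `x ≻ y` and `x ≠ y`
then `f(x) < f(y)`. -/
theorem strict_schur_concave_two_qubit_boundary_function (x y : Fin 4 → ℝ)
    (hx : x 0 ≥ x 1 ∧ x 1 ≥ x 2 ∧ x 2 ≥ x 3 ∧ x 3 ≥ 0)
    (hy : y 0 ≥ y 1 ∧ y 1 ≥ y 2 ∧ y 2 ≥ y 3 ∧ y 3 ≥ 0)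
    (hmaj : Majorizes x y) (hne : x ≠ y) :
    x 2 + 2 * Real.sqrt (x 1 * x 3) - x 0 < y 2 + 2 * Real.sqrt (y 1 * y 3) - y 0 := by
  obtain ⟨hk, hs⟩ := hmaj
  have h1 : y 0 ≤ x 0 :=
    le_trans (le_trans (le_maxSum1 y) (hk 1)) (maxSum1_le x hx)
  have h2 : y 0 + y 1 ≤ x 0 + x 1 :=
    le_trans (le_trans (le_maxSum2 y) (hk 2)) (maxSum2_le x hx)
  have h3 : y 0 + y 1 + y 2 ≤ x 0 + x 1 + x 2 :=
    le_trans (le_trans (le_maxSum3 y) (hk 3)) (maxSum3_le x hx)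
  have hsum : y 0 + y 1 + y 2 + y 3 = x 0 + x 1 + x 2 + x 3 := by
    simpa [Fin.sum_univ_four] using hs
  have hne' : ¬(x 0 = y 0 ∧ x 1 = y 1 ∧ x 2 = y 2 ∧ x 3 = y 3) := by
    rintro ⟨e0, e1, e2, e3⟩
    exact hne (funext fun i => by fin_cases i <;> assumption)
  exact core_ineq (x 0) (x 1) (x 2) (x 3) (y 0) (y 1) (y 2) (y 3)
    hx.1 hx.2.1 hx.2.2.1 hx.2.2.2 hy.1 hy.2.1 hy.2.2.1 hy.2.2.2
    h1 h2 h3 hsum hne'
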